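/- For ξ ∈ ℝ set c(ξ) := 1/(2 − ξ² − 3iξ) (note 2 − ξ² − 3iξ ≠ 0 for all real ξ), and define the Jost solutions f₊(x,ξ) := c(ξ)·(D₂*(D₁*(e_ξ)))(x) with e_ξ(x) = e^{ixξ}, and f₋(x,ξ) := c(ξ)·(D₂*(D₁*(e_{-ξ})))(x). Then for every ξ ∈ ℝ: (i) for all x ∈ ℝ, −∂ₓ²f₊(x,ξ) − 6 sech²(x) f₊(x,ξ) = ξ² f₊(x,ξ) and −∂ₓ²f₋(x,ξ) − 6 sech²(x) f₋(x,ξ) = ξ² f₋(x,ξ); (ii) e^{-ixξ} f₊(x,ξ) → 1 as x → +∞ and e^{ixξ} f₋(x,ξ) → 1 as x → −∞. -/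

import Mathlib

noncomputable section

/-- `sech x = 1 / cosh x`. -/
def sech (x : ℝ) : ℝ := 1 / Real.cosh x

/-- `D₁* f = −f' + tanh · f`. -/
def D1s (f : ℝ → ℂ) (x : ℝ) : ℂ := -(deriv f x) + (Real.tanh x : ℂ) * f x

/-- `D₂* f = −f' + 2 tanh · f`. -/
def D2s (f : ℝ → ℂ) (x : ℝ) : ℂ := -(deriv f x) + 2 * (Real.tanh x : ℂ) * f x

/-- `c(ξ) = 1/(2 − ξ² − 3iξ)`. -/
def cJost (ξ : ℝ) : ℂ := (2 - (ξ : ℂ) ^ 2 - 3 * Complex.I * (ξ : ℂ))⁻¹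

/-- The plane wave `e_ξ(x) = e^{ixξ}`. -/
def eexp (ξ : ℝ) : ℝ → ℂ := fun x => Complex.exp (Complex.I * (x : ℂ) * (ξ : ℂ))

/-- The Jost solution `f₊(·,ξ) = c(ξ) D₂*(D₁*(e^{i·ξ}))`. -/
def fplus (ξ : ℝ) : ℝ → ℂ := fun x => cJost ξ * D2s (D1s (eexp ξ)) x

/-- The Jost solution `f₋(·,ξ) = c(ξ) D₂*(D₁*(e^{-i·ξ}))`. -/
def fminus (ξ : ℝ) : ℝ → ℂ := fun x => cJost ξ * D2s (D1s (eexp (-ξ))) x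

open Filter

namespace JostAux

/-- complex tanh cast -/
def T (x : ℝ) : ℂ := (Real.tanh x : ℂ)

def Mf (a : ℂ) (x : ℝ) : ℂ := -1 + a ^ 2 - 3 * a * T x + 3 * T x ^ 2

def Nf (a : ℂ) (x : ℝ) : ℂ := a * Mf a x + (6 * T x - 3 * a) * (1 - T x ^ 2)

def Pf (a : ℂ) (x : ℝ) : ℂ :=
  a * Nf a x + (1 - T x ^ 2) *
    (a * (6 * T x - 3 * a) + 6 * (1 - T x ^ 2) - 2 * T x * (6 * T x - 3 * a))

lemma hasDerivAt_tanh (x : ℝ) : HasDerivAt Real.tanh (1 - Real.tanh x ^ 2) x := by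
  have hc : Real.cosh x ≠ 0 := (Real.cosh_pos x).ne'
  have h := (Real.hasDerivAt_sinh x).div (Real.hasDerivAt_cosh x) hc
  have hfun : (fun y => Real.sinh y / Real.cosh y) = Real.tanh := by
    funext y; rw [Real.tanh_eq_sinh_div_cosh]
  rw [show (Real.sinh / Real.cosh) = Real.tanh from hfun] at h
  convert h using 1
  rfl
  rfl
  have h2 := Real.cosh_sq_sub_sinh_sq x
  rw [Real.tanh_eq_sinh_div_cosh]
  field_simp

lemma hasDerivAt_T (x : ℝ) : HasDerivAt T (1 - T x ^ 2) x := by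
  have := (hasDerivAt_tanh x).ofReal_comp
  convert this using 1
  · rfl
  · simp [T]

lemma hasDerivAt_eexp (η : ℝ) (x : ℝ) :
    HasDerivAt (eexp η) (Complex.I * η * eexp η x) x := by
  have h1 : HasDerivAt (fun y : ℝ => (y : ℂ)) 1 x := by
    simpa using (hasDerivAt_id x).ofReal_comp
  have h2 : HasDerivAt (fun y : ℝ => Complex.I * (y : ℂ) * (η : ℂ))
      (Complex.I * η) x := by
    have := (h1.const_mul Complex.I).mul_const (η : ℂ)
    convert this using 1; rfl; ring
  have := h2.cexp
  convert this using 1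
  unfold eexp; ring
  unfold eexp; ring

lemma hasDerivAt_Mf (a : ℂ) (x : ℝ) :
    HasDerivAt (Mf a) ((6 * T x - 3 * a) * (1 - T x ^ 2)) x := by
  have h := (((hasDerivAt_const x ((-1 : ℂ) + a ^ 2)).sub
      ((hasDerivAt_T x).const_mul (3 * a))).add
      (((hasDerivAt_T x).mul (hasDerivAt_T x)).const_mul 3))
  convert h using 1
  · rfl
  · funext y; simp only [Mf, Pi.add_apply, Pi.sub_apply, Pi.mul_apply]; ring
  · ring

lemma hasDerivAt_Nf (a : ℂ) (x : ℝ) :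
    HasDerivAt (Nf a)
      (a * ((6 * T x - 3 * a) * (1 - T x ^ 2)) +
        (1 - T x ^ 2) * (6 * (1 - T x ^ 2) - 2 * T x * (6 * T x - 3 * a))) x := by
  have h := ((hasDerivAt_Mf a x).const_mul a).add
    ((((hasDerivAt_T x).const_mul 6).sub_const (3 * a)).mul
      ((hasDerivAt_const x (1 : ℂ)).sub ((hasDerivAt_T x).mul (hasDerivAt_T x))))
  convert h using 1
  · rfl
  · funext y; simp only [Nf, Pi.add_apply, Pi.sub_apply, Pi.mul_apply, Pi.pow_apply]; ring
  · simp only [Pi.sub_apply, Pi.mul_apply]; ring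

lemma d2s_eq (η : ℝ) :
    (fun x => D2s (D1s (eexp η)) x) = fun x => eexp η x * Mf (Complex.I * η) x := by
  have hd1 : D1s (eexp η) = fun x => (T x - Complex.I * η) * eexp η x := by
    funext x
    unfold D1s T
    rw [(hasDerivAt_eexp η x).deriv]
    ring
  funext x
  unfold D2s
  rw [hd1]
  have hg : HasDerivAt (fun y => (T y - Complex.I * η) * eexp η y)
      ((1 - T x ^ 2) * eexp η x + (T x - Complex.I * η) * (Complex.I * η * eexp η x)) x :=
    ((hasDerivAt_T x).sub_const (Complex.I * η)).mul (hasDerivAt_eexp η x)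
  rw [hg.deriv]
  unfold Mf T
  ring

lemma sech_sq (x : ℝ) : ((sech x : ℝ) : ℂ) ^ 2 = 1 - T x ^ 2 := by
  have hc : Real.cosh x ≠ 0 := (Real.cosh_pos x).ne'
  have : (sech x) ^ 2 = 1 - Real.tanh x ^ 2 := by
    unfold sech
    rw [Real.tanh_eq_sinh_div_cosh]
    have h2 := Real.cosh_sq_sub_sinh_sq x
    field_simp
    linarith
  have h3 := congrArg (fun r : ℝ => (r : ℂ)) this
  push_cast at h3
  simpa [T] using h3

/-- key ODE lemma for `F x = k * D2s (D1s (eexp η)) x`. -/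
lemma ode (η : ℝ) (k : ℂ) (x : ℝ) :
    -(deriv (deriv (fun x => k * D2s (D1s (eexp η)) x)) x)
        - 6 * ((sech x : ℝ) : ℂ) ^ 2 * (k * D2s (D1s (eexp η)) x)
      = (η : ℂ) ^ 2 * (k * D2s (D1s (eexp η)) x) := by
  set a : ℂ := Complex.I * η with ha
  have hF : (fun x => k * D2s (D1s (eexp η)) x) = fun x => k * (eexp η x * Mf a x) := by
    funext y
    rw [congrFun (d2s_eq η) y]
  have hd1 : ∀ y : ℝ, HasDerivAt (fun x => k * (eexp η x * Mf a x))
      (k * (eexp η y * Nf a y)) y := by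
    intro y
    have h := ((hasDerivAt_eexp η y).mul (hasDerivAt_Mf a y)).const_mul k
    convert h using 1
    rfl
    rfl
    unfold Nf
    rw [ha]; ring
  have hD1 : deriv (fun x => k * D2s (D1s (eexp η)) x) =
      fun y => k * (eexp η y * Nf a y) := by
    rw [hF]; funext y; exact (hd1 y).deriv
  have hd2 : HasDerivAt (fun y => k * (eexp η y * Nf a y)) (k * (eexp η x * Pf a x)) x := by
    have h := ((hasDerivAt_eexp η x).mul (hasDerivAt_Nf a x)).const_mul k
    convert h using 1
    rfl
    rfl
    unfold Pf
    rw [ha]; ring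
  rw [hD1, hd2.deriv, congrFun hF x, sech_sq]
  have hη : (η : ℂ) ^ 2 = -a ^ 2 := by
    rw [ha, mul_pow, Complex.I_sq]; ring
  rw [hη]
  unfold Pf Nf Mf
  ring

lemma tanh_atTop : Tendsto Real.tanh atTop (nhds 1) := by
  have hrw : ∀ x : ℝ, Real.tanh x =
      (1 - Real.exp (-2 * x)) / (1 + Real.exp (-2 * x)) := by
    intro x
    rw [Real.tanh_eq_sinh_div_cosh, Real.sinh_eq, Real.cosh_eq]
    have hu : Real.exp x ≠ 0 := (Real.exp_pos x).ne'
    have h1 : Real.exp (-x) = (Real.exp x)⁻¹ := Real.exp_neg x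
    have h2 : Real.exp (-2 * x) = (Real.exp x)⁻¹ ^ 2 := by
      rw [← Real.exp_neg, ← Real.exp_nat_mul]; ring_nf
    rw [h1, h2]
    have hpos : (0:ℝ) < 1 + (Real.exp x)⁻¹ ^ 2 := by positivity
    field_simp
  have h0 : Tendsto (fun x : ℝ => Real.exp (-2 * x)) atTop (nhds 0) := by
    have h := (tendsto_id (α := ℝ)).const_mul_atTop (show (0:ℝ) < 2 by norm_num)
    have h2x : Tendsto (fun x : ℝ => -2 * x) atTop atBot := by
      refine (tendsto_neg_atTop_atBot.comp h).congr fun x => ?_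
      simp [Function.comp]
    exact Real.tendsto_exp_atBot.comp h2x
  have hd := Tendsto.div ((tendsto_const_nhds (x := (1:ℝ))).sub h0)
    ((tendsto_const_nhds (x := (1:ℝ))).add h0) (by norm_num : (1 + 0 : ℝ) ≠ 0)
  simp only [sub_zero, add_zero, div_one] at hd
  exact hd.congr fun x => (hrw x).symm

lemma tanh_atBot : Tendsto Real.tanh atBot (nhds (-1)) := by
  have h := tanh_atTop.comp tendsto_neg_atBot_atTop
  have : Tendsto (fun x : ℝ => -Real.tanh (-x)) atBot (nhds (-1)) := by
    simpa using h.neg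
  exact this.congr fun x => by rw [Real.tanh_neg]; ring

lemma tendsto_Mf (a : ℂ) (l : Filter ℝ) (t₀ : ℂ) (ht : Tendsto T l (nhds t₀)) :
    Tendsto (Mf a) l (nhds (-1 + a ^ 2 - 3 * a * t₀ + 3 * t₀ ^ 2)) := by
  have hg : Continuous fun t : ℂ => -1 + a ^ 2 - 3 * a * t + 3 * t ^ 2 := by continuity
  exact ((hg.tendsto t₀).comp ht).congr fun x => by simp [Mf]

end JostAux

/-- The Jost solutions of `H = −∂ₓ² − 6 sech²` at energy `ξ²` and their normalizations. -/
theorem jost_solutions :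
    (∀ ξ : ℝ, (2 - (ξ : ℂ) ^ 2 - 3 * Complex.I * (ξ : ℂ)) ≠ 0) ∧
      ∀ ξ : ℝ,
        ((∀ x : ℝ,
            -(deriv (deriv (fplus ξ)) x) - 6 * (sech x : ℂ) ^ 2 * fplus ξ x
              = (ξ : ℂ) ^ 2 * fplus ξ x) ∧
          ∀ x : ℝ,
            -(deriv (deriv (fminus ξ)) x) - 6 * (sech x : ℂ) ^ 2 * fminus ξ x
              = (ξ : ℂ) ^ 2 * fminus ξ x) ∧
        Filter.Tendsto (fun x : ℝ => Complex.exp (-(Complex.I * (x : ℂ) * (ξ : ℂ))) * fplus ξ x)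
          Filter.atTop (nhds 1) ∧
        Filter.Tendsto (fun x : ℝ => Complex.exp (Complex.I * (x : ℂ) * (ξ : ℂ)) * fminus ξ x)
          Filter.atBot (nhds 1) := by
  open JostAux in
  have hne : ∀ ξ : ℝ, (2 - (ξ : ℂ) ^ 2 - 3 * Complex.I * (ξ : ℂ)) ≠ 0 := by
    intro ξ h
    have h1 := congrArg Complex.im h
    have h2 := congrArg Complex.re h
    simp [Complex.sub_im, Complex.sub_re, Complex.mul_im, Complex.mul_re, pow_two] at h1 h2
    nlinarith [h1, h2]
  refine ⟨hne, fun ξ => ⟨⟨fun x => JostAux.ode ξ (cJost ξ) x, fun x => ?_⟩, ?_, ?_⟩⟩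
  · have h := JostAux.ode (-ξ) (cJost ξ) x
    have hcast : (((-ξ : ℝ) : ℂ)) ^ 2 = (ξ : ℂ) ^ 2 := by push_cast; ring
    rw [hcast] at h
    exact h
  · -- atTop limit for fplus
    have hT1 : Tendsto T atTop (nhds 1) := by
      have := (Complex.continuous_ofReal.tendsto 1).comp tanh_atTop
      exact this
    set a : ℂ := Complex.I * ξ with ha
    have hM := (tendsto_Mf a atTop 1 hT1).const_mul (cJost ξ)
    have hval : cJost ξ * (-1 + a ^ 2 - 3 * a * 1 + 3 * 1 ^ 2) = 1 := by
      have hv : (-1 + a ^ 2 - 3 * a * 1 + 3 * 1 ^ 2 : ℂ)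
          = 2 - (ξ : ℂ) ^ 2 - 3 * Complex.I * (ξ : ℂ) := by
        rw [ha, mul_pow, Complex.I_sq]; ring
      rw [hv]
      exact inv_mul_cancel₀ (hne ξ)
    rw [hval] at hM
    refine hM.congr fun x => ?_
    have he : Complex.exp (-(Complex.I * (x : ℂ) * (ξ : ℂ))) *
        Complex.exp (Complex.I * (x : ℂ) * (ξ : ℂ)) = 1 := by
      rw [← Complex.exp_add]; simp
    have hfx : fplus ξ x = cJost ξ * (eexp ξ x * Mf a x) := by
      unfold fplus
      rw [congrFun (d2s_eq ξ) x]
    rw [hfx]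
    unfold eexp
    calc cJost ξ * Mf a x
        = (Complex.exp (-(Complex.I * (x : ℂ) * (ξ : ℂ))) *
            Complex.exp (Complex.I * (x : ℂ) * (ξ : ℂ))) * (cJost ξ * Mf a x) := by
          rw [he, one_mul]
      _ = Complex.exp (-(Complex.I * (x : ℂ) * (ξ : ℂ))) *
            (cJost ξ * (Complex.exp (Complex.I * (x : ℂ) * (ξ : ℂ)) * Mf a x)) := by ring
  · -- atBot limit for fminus
    have hT1 : Tendsto T atBot (nhds (-1)) := by
      have := (Complex.continuous_ofReal.tendsto (-1)).comp tanh_atBot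
      rw [Complex.ofReal_neg, Complex.ofReal_one] at this
      exact this
    set a : ℂ := Complex.I * ((-ξ : ℝ) : ℂ) with ha
    have hM := (tendsto_Mf a atBot (-1) hT1).const_mul (cJost ξ)
    have hval : cJost ξ * (-1 + a ^ 2 - 3 * a * (-1) + 3 * (-1) ^ 2) = 1 := by
      have hv : (-1 + a ^ 2 - 3 * a * (-1) + 3 * (-1) ^ 2 : ℂ)
          = 2 - (ξ : ℂ) ^ 2 - 3 * Complex.I * (ξ : ℂ) := by
        rw [ha, mul_pow, Complex.I_sq]; push_cast; ring
      rw [hv]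
      exact inv_mul_cancel₀ (hne ξ)
    rw [hval] at hM
    refine hM.congr fun x => ?_
    have he : Complex.exp (Complex.I * (x : ℂ) * (ξ : ℂ)) *
        Complex.exp (Complex.I * (x : ℂ) * ((-ξ : ℝ) : ℂ)) = 1 := by
      rw [← Complex.exp_add]
      push_cast
      ring_nf
      exact Complex.exp_zero
    have hfx : fminus ξ x = cJost ξ * (eexp (-ξ) x * Mf a x) := by
      unfold fminus
      rw [congrFun (d2s_eq (-ξ)) x]
    rw [hfx]
    unfold eexp
    calc cJost ξ * Mf a x
        = (Complex.exp (Complex.I * (x : ℂ) * (ξ : ℂ)) *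
            Complex.exp (Complex.I * (x : ℂ) * ((-ξ : ℝ) : ℂ))) * (cJost ξ * Mf a x) := by
          rw [he, one_mul]
      _ = Complex.exp (Complex.I * (x : ℂ) * (ξ : ℂ)) *
            (cJost ξ * (Complex.exp (Complex.I * (x : ℂ) * ((-ξ : ℝ) : ℂ)) * Mf a x)) := by
          ring
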